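/- Let G be a nonempty r-uniform hypergraph on M ≥ 100r vertices whose density is at most 1−α for some α > 0. Then there exists an (r−1)-element vertex set X such that 1 ≤ |N(X)| ≤ (1 − α/(2r))·M, where N(X) = {v : X ∪ {v} is an edge of G}. -/

import Mathlib

open Finset

/-- Key lemma: if `E` is a nonempty `r`-uniform hypergraph in which every `(r-1)`-set
with nonempty neighborhood has neighborhood of size `> K`, then `K^r ≤ r! * |E|`. -/
lemma key_lemma (V : Type) [Fintype V] [DecidableEq V] (K : ℝ) (hK : 0 ≤ K) :
    ∀ (r : ℕ) (E : Finset (Finset V)), E.Nonempty → (∀ e ∈ E, e.card = r) →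
    (∀ X : Finset V, X.card = r - 1 →
      (Finset.univ.filter (fun v => v ∉ X ∧ insert v X ∈ E)).Nonempty →
      K < ((Finset.univ.filter (fun v => v ∉ X ∧ insert v X ∈ E)).card : ℝ)) →
    K ^ r ≤ (r.factorial : ℝ) * E.card := by
  intro r
  induction r with
  | zero =>
    intro E hne _ _
    have h1 : 1 ≤ E.card := Finset.card_pos.mpr hne
    have : (1 : ℝ) ≤ E.card := by exact_mod_cast h1
    simpa using this
  | succ r ih =>
    intro E hne hunif hcod
    classical
    set S : Finset V := E.biUnion id with hS
    -- link bound
    have hlink : ∀ v ∈ S, K ^ r ≤ (r.factorial : ℝ) * ((E.filter (fun e => v ∈ e)).card : ℝ) := by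
      intro v hv
      set Ev : Finset (Finset V) := (E.filter (fun e => v ∈ e)).image (fun e => e.erase v)
        with hEvdef
      have hcardEv : Ev.card = (E.filter (fun e => v ∈ e)).card := by
        apply Finset.card_image_of_injOn
        intro e₁ h₁ e₂ h₂ h12
        simp only [Finset.mem_coe, Finset.mem_filter] at h₁ h₂
        rw [← Finset.insert_erase h₁.2, ← Finset.insert_erase h₂.2]
        exact congrArg (insert v) h12
      have hne' : Ev.Nonempty := by
        simp only [hS, Finset.mem_biUnion, id] at hv
        obtain ⟨e, he, hve⟩ := hv
        exact ⟨e.erase v, Finset.mem_image.mpr ⟨e, Finset.mem_filter.mpr ⟨he, hve⟩, rfl⟩⟩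
      have hunif' : ∀ e' ∈ Ev, e'.card = r := by
        intro e' he'
        obtain ⟨e, he, rfl⟩ := Finset.mem_image.mp he'
        rw [Finset.card_erase_of_mem (Finset.mem_filter.mp he).2,
          hunif e (Finset.mem_filter.mp he).1]
        omega
      have hcod' : ∀ X : Finset V, X.card = r - 1 →
          (Finset.univ.filter (fun u => u ∉ X ∧ insert u X ∈ Ev)).Nonempty →
          K < ((Finset.univ.filter (fun u => u ∉ X ∧ insert u X ∈ Ev)).card : ℝ) := by
        intro X hX hNe
        obtain ⟨u, hu⟩ := hNe
        simp only [Finset.mem_filter, Finset.mem_univ, true_and] at hu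
        obtain ⟨huX, huEv⟩ := hu
        obtain ⟨e, he, heq⟩ := Finset.mem_image.mp huEv
        have hvnot : v ∉ insert u X := by
          rw [← heq]; exact Finset.notMem_erase v e
        have hvX : v ∉ X := fun h => hvnot (Finset.mem_insert_of_mem h)
        have hXcard : X.card + 1 = r := by
          have h := hunif' _ huEv
          rwa [Finset.card_insert_of_notMem huX] at h
        have hNeq : (Finset.univ.filter (fun u => u ∉ X ∧ insert u X ∈ Ev))
            = (Finset.univ.filter
                (fun w => w ∉ insert v X ∧ insert w (insert v X) ∈ E)) := by
          ext w
          simp only [Finset.mem_filter, Finset.mem_univ, true_and]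
          constructor
          · rintro ⟨hwX, hwEv⟩
            obtain ⟨f, hf, hfeq⟩ := Finset.mem_image.mp hwEv
            have hvf : v ∈ f := (Finset.mem_filter.mp hf).2
            have hwv : w ≠ v := by
              intro h; subst h
              exact (Finset.notMem_erase w f) (hfeq ▸ Finset.mem_insert_self w X)
            refine ⟨by simp [Finset.mem_insert, hwX, hwv], ?_⟩
            have hfeq2 : f = insert v (insert w X) := by
              rw [← Finset.insert_erase hvf, hfeq]
            rw [Finset.insert_comm, ← hfeq2]
            exact (Finset.mem_filter.mp hf).1
          · rintro ⟨hw, hwE⟩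
            have hwv : w ≠ v := fun h => hw (h ▸ Finset.mem_insert_self v X)
            have hwX : w ∉ X := fun h => hw (Finset.mem_insert_of_mem h)
            refine ⟨hwX, ?_⟩
            apply Finset.mem_image.mpr
            refine ⟨insert w (insert v X), Finset.mem_filter.mpr ⟨hwE, ?_⟩, ?_⟩
            · exact Finset.mem_insert_of_mem (Finset.mem_insert_self v X)
            · rw [Finset.insert_comm]
              apply Finset.erase_insert
              simp [Finset.mem_insert, hvX, hwv.symm]
        rw [hNeq]
        apply hcod
        · rw [Finset.card_insert_of_notMem hvX]
          omega
        · rw [← hNeq]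
          refine ⟨u, ?_⟩
          simp only [Finset.mem_filter, Finset.mem_univ, true_and]
          exact ⟨huX, huEv⟩
      have h := ih Ev hne' hunif' hcod'
      rwa [hcardEv] at h
    -- size of the support
    obtain ⟨e₀, he₀⟩ := hne
    have he₀card := hunif e₀ he₀
    have he₀ne : e₀.Nonempty := by rw [← Finset.card_pos, he₀card]; omega
    obtain ⟨v₀, hv₀⟩ := he₀ne
    set X₀ : Finset V := e₀.erase v₀ with hX₀def
    have hX₀card : X₀.card = r := by
      rw [hX₀def, Finset.card_erase_of_mem hv₀, he₀card]
      omega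
    have hv₀X₀ : v₀ ∉ X₀ := Finset.notMem_erase _ _
    set N₀ : Finset V := Finset.univ.filter (fun v => v ∉ X₀ ∧ insert v X₀ ∈ E) with hN₀def
    have hN₀ne : N₀.Nonempty := by
      refine ⟨v₀, ?_⟩
      simp only [hN₀def, Finset.mem_filter, Finset.mem_univ, true_and]
      exact ⟨hv₀X₀, by rw [Finset.insert_erase hv₀]; exact he₀⟩
    have hKlt : K < (N₀.card : ℝ) := hcod X₀ (by omega) hN₀ne
    have hsub : X₀ ∪ N₀ ⊆ S := by
      intro w hw
      rcases Finset.mem_union.mp hw with h | h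
      · exact Finset.mem_biUnion.mpr ⟨e₀, he₀, Finset.mem_of_mem_erase h⟩
      · simp only [hN₀def, Finset.mem_filter] at h
        exact Finset.mem_biUnion.mpr ⟨insert w X₀, h.2.2, Finset.mem_insert_self w X₀⟩
    have hdisj : Disjoint X₀ N₀ := by
      rw [Finset.disjoint_left]
      intro a ha haN
      exact ((Finset.mem_filter.mp haN).2).1 ha
    have hScard : (r : ℝ) + K < (S.card : ℝ) := by
      have h1 : X₀.card + N₀.card ≤ S.card := by
        rw [← Finset.card_union_of_disjoint hdisj]
        exact Finset.card_le_card hsub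
      have h1' : (X₀.card : ℝ) + (N₀.card : ℝ) ≤ (S.card : ℝ) := by exact_mod_cast h1
      rw [hX₀card] at h1'
      linarith
    -- double counting
    have hcount : ∑ v ∈ S, ((E.filter (fun e => v ∈ e)).card) = (r + 1) * E.card := by
      have h1 : ∀ v, (E.filter (fun e => v ∈ e)).card = ∑ e ∈ E, if v ∈ e then 1 else 0 :=
        fun v => Finset.card_filter _ _
      calc ∑ v ∈ S, ((E.filter (fun e => v ∈ e)).card)
          = ∑ v ∈ S, ∑ e ∈ E, if v ∈ e then 1 else 0 := by
            exact Finset.sum_congr rfl fun v _ => h1 v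
        _ = ∑ e ∈ E, ∑ v ∈ S, if v ∈ e then 1 else 0 := Finset.sum_comm
        _ = ∑ e ∈ E, (S.filter (fun v => v ∈ e)).card := by
            exact Finset.sum_congr rfl fun e _ => (Finset.card_filter _ _).symm
        _ = ∑ e ∈ E, e.card := by
            refine Finset.sum_congr rfl fun e heE => ?_
            congr 1
            rw [Finset.filter_mem_eq_inter, Finset.inter_eq_right]
            intro x hx
            exact Finset.mem_biUnion.mpr ⟨e, heE, hx⟩
        _ = ∑ e ∈ E, (r + 1) := Finset.sum_congr rfl fun e heE => hunif e heE
        _ = E.card * (r + 1) := Finset.sum_const_nat fun _ h => rfl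
        _ = (r + 1) * E.card := Nat.mul_comm _ _
    -- combine
    have hsum : (S.card : ℝ) * K ^ r ≤ ((r + 1).factorial : ℝ) * E.card := by
      have h1 : ∑ v ∈ S, K ^ r ≤ ∑ v ∈ S, (r.factorial : ℝ) * ((E.filter (fun e => v ∈ e)).card : ℝ) :=
        Finset.sum_le_sum hlink
      have h2 : ∑ v ∈ S, K ^ r = (S.card : ℝ) * K ^ r := by
        rw [Finset.sum_const, nsmul_eq_mul]
      have h3 : ∑ v ∈ S, (r.factorial : ℝ) * ((E.filter (fun e => v ∈ e)).card : ℝ)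
          = (r.factorial : ℝ) * ((∑ v ∈ S, (E.filter (fun e => v ∈ e)).card : ℕ) : ℝ) := by
        rw [← Finset.mul_sum]
        push_cast
        ring
      rw [h2] at h1
      rw [h3, hcount] at h1
      calc (S.card : ℝ) * K ^ r ≤ (r.factorial : ℝ) * (((r + 1) * E.card : ℕ) : ℝ) := h1
        _ = ((r + 1).factorial : ℝ) * E.card := by
            rw [Nat.factorial_succ]
            push_cast
            ring
    have hKr : (0 : ℝ) ≤ K ^ r := pow_nonneg hK r
    calc K ^ (r + 1) = K ^ r * K := pow_succ K r
      _ ≤ K ^ r * ((r : ℝ) + K) := by nlinarith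
      _ ≤ K ^ r * (S.card : ℝ) := by nlinarith
      _ = (S.card : ℝ) * K ^ r := mul_comm _ _
      _ ≤ ((r + 1).factorial : ℝ) * E.card := hsum

/-- A nonempty r-uniform hypergraph of density ≤ 1-α on M ≥ 100r vertices has an
(r-1)-set X with 1 ≤ |N(X)| ≤ (1 - α/(2r))·M. -/
theorem stmt_1 (r M : ℕ) (hr : 0 < r) (hM : 100 * r ≤ M) (α : ℝ) (hα : 0 < α)
    (V : Type) [Fintype V] [DecidableEq V] (hV : Fintype.card V = M)
    (E : Finset (Finset V)) (hunif : ∀ e ∈ E, e.card = r) (hne : E.Nonempty)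
    (hdens : (E.card : ℝ) ≤ (1 - α) * (M.choose r : ℝ)) :
    ∃ X : Finset V, X.card = r - 1 ∧
      1 ≤ ((Finset.univ.filter (fun v => v ∉ X ∧ insert v X ∈ E)).card : ℕ) ∧
      (((Finset.univ.filter (fun v => v ∉ X ∧ insert v X ∈ E)).card : ℝ)) ≤
        (1 - α / (2 * r)) * M := by
  by_contra hcon
  push_neg at hcon
  have hMpos : 0 < M := by omega
  have hMR : (0 : ℝ) < M := by exact_mod_cast hMpos
  have hrR : (0 : ℝ) < r := by exact_mod_cast hr
  have hCnn : (0 : ℝ) ≤ (M.choose r : ℝ) := Nat.cast_nonneg _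
  have h1E : (1 : ℝ) ≤ (E.card : ℝ) := by
    exact_mod_cast Finset.card_pos.mpr hne
  have hα1 : α < 1 := by
    by_contra h'
    push_neg at h'
    have h1 : (1 - α) ≤ 0 := by linarith
    have h2 : (1 - α) * (M.choose r : ℝ) ≤ 0 := mul_nonpos_of_nonpos_of_nonneg h1 hCnn
    linarith
  set K : ℝ := (1 - α / (2 * (r : ℝ))) * (M : ℝ) with hKdef
  have hr1 : (1 : ℝ) ≤ (r : ℝ) := by exact_mod_cast hr
  have hfrac : α / (2 * (r : ℝ)) ≤ α / 2 := by
    rw [div_le_div_iff₀ (by positivity) (by norm_num)]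
    nlinarith
  have hfracnn : 0 ≤ α / (2 * (r : ℝ)) := by positivity
  have hK : 0 ≤ K := by
    apply mul_nonneg _ (le_of_lt hMR)
    linarith
  have hkey := key_lemma V K hK r E hne hunif ?_
  · -- numeric contradiction
    have h2 : (r.factorial : ℝ) * (E.card : ℝ) ≤ (1 - α) * ((r.factorial : ℝ) * (M.choose r : ℝ)) := by
      have := mul_le_mul_of_nonneg_left hdens (by positivity : (0:ℝ) ≤ (r.factorial : ℝ))
      linarith
    have h3 : (r.factorial : ℝ) * (M.choose r : ℝ) ≤ (M : ℝ) ^ r := by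
      have hnat : r.factorial * M.choose r ≤ M ^ r := by
        rw [← Nat.descFactorial_eq_factorial_mul_choose]
        exact Nat.descFactorial_le_pow M r
      exact_mod_cast hnat
    have h4 : (1 - α / 2) * (M : ℝ) ^ r ≤ K ^ r := by
      have hb : (1 : ℝ) - α / 2 ≤ (1 - α / (2 * (r : ℝ))) ^ r := by
        have := one_add_mul_le_pow (a := -(α / (2 * (r : ℝ)))) (by linarith) r
        have heq : 1 + (r : ℝ) * -(α / (2 * (r : ℝ))) = 1 - α / 2 := by
          field_simp
          ring
        rw [heq, ← sub_eq_add_neg] at this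
        exact this
      have hMrnn : (0 : ℝ) ≤ (M : ℝ) ^ r := by positivity
      calc (1 - α / 2) * (M : ℝ) ^ r ≤ (1 - α / (2 * (r : ℝ))) ^ r * (M : ℝ) ^ r := by
            nlinarith
        _ = K ^ r := by rw [hKdef, mul_pow]
    have h5 : (1 - α) * ((r.factorial : ℝ) * (M.choose r : ℝ)) ≤ (1 - α) * (M : ℝ) ^ r := by
      apply mul_le_mul_of_nonneg_left h3
      linarith
    have hMpow : (0 : ℝ) < (M : ℝ) ^ r := by positivity
    nlinarith
  · intro X hX hNe
    have h1 : 1 ≤ (Finset.univ.filter (fun v => v ∉ X ∧ insert v X ∈ E)).card :=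
      Finset.card_pos.mpr hNe
    exact hcon X hX h1
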